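/- arXiv:0910.2949 — 5 statements merged into one kernel-verified Lean document; each statement's English description precedes it below -/
import Mathlib

section
/- For every n ≥ 0, the submodule Fⁿ of E coincides with the K-span of the ordered basis monomials ℏ_{Γ₁}⋯ℏ_{Γ_k} (k ≥ 0, Γ₁ ⪰ … ⪰ Γ_k in Y⁺) satisfying Σᵢ (|Γ_i| − 1) ≥ n; moreover Fᵐ·Fⁿ ⊆ F^{m+n} for all m, n ≥ 0, so F is a decreasing algebra filtration of E. -/
open scoped Classical

noncomputable section

namespace NC

/-- Number of leaves of a planar binary tree. -/
def leaves {α : Type*} : FreeMagma α → ℕ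
  | .of _ => 1
  | .mul a b => leaves a + leaves b

/-- The list of leaf labels of a planar binary tree, read left to right. -/
def leafList {α : Type*} : FreeMagma α → List α
  | .of i => [i]
  | .mul a b => leafList a ++ leafList b

/-- Planar binary trees with leaves labelled in `Fin (2*d)`. -/
abbrev M (d : ℕ) := FreeMagma (Fin (2 * d))

/-- The strict order `≺` on labelled planar binary trees. -/
def mlt {d : ℕ} : M d → M d → Prop
  | .of i, .of j => i < j
  | .of _, .mul _ _ => True
  | .mul _ _, .of _ => False
  | .mul a b, .mul c e =>
      leaves (FreeMagma.mul a b) < leaves (FreeMagma.mul c e) ∨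
        (leaves (FreeMagma.mul a b) = leaves (FreeMagma.mul c e) ∧
          (mlt a c ∨ (a = c ∧ mlt b e)))

/-- `a ⪰ b`. -/
def mge {d : ℕ} (a b : M d) : Prop := mlt b a ∨ a = b

/-- The set `Y⁺` of admissible trees. -/
inductive Yplus {d : ℕ} : M d → Prop
  | of (i : Fin (2 * d)) : Yplus (FreeMagma.of i)
  | mul {a b : M d} : Yplus a → Yplus b → mlt a b → Yplus (a * b)

abbrev Yp (d : ℕ) := {Γ : M d // Yplus Γ}

variable {d : ℕ} {K : Type*} [CommRing K]

/-- Extension of `q` to pairs of trees. -/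
def qT (q : Fin (2 * d) → Fin (2 * d) → Kˣ) (Γ Γ' : M d) : Kˣ :=
  ((leafList Γ).map fun i => ((leafList Γ').map fun j => q i j).prod).prod

/-- Defining relations of the bracketing (epoché) algebra. -/
inductive Erel (q : Fin (2 * d) → Fin (2 * d) → Kˣ) :
    FreeAlgebra K (M d) → FreeAlgebra K (M d) → Prop
  | rel (Γ Γ' : M d) :
      Erel q (FreeAlgebra.ι K Γ * FreeAlgebra.ι K Γ')
        (((qT q Γ' Γ : Kˣ) : K) • (FreeAlgebra.ι K Γ' * FreeAlgebra.ι K Γ)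
          + FreeAlgebra.ι K (Γ * Γ'))

/-- The bracketing (epoché) algebra `E`. -/
abbrev E (q : Fin (2 * d) → Fin (2 * d) → Kˣ) := RingQuot (Erel (K := K) q)

/-- The noncommutative Planck constants `ℏ_Γ`. -/
def hbar (q : Fin (2 * d) → Fin (2 * d) → Kˣ) (Γ : M d) : E q :=
  RingQuot.mkAlgHom K (Erel q) (FreeAlgebra.ι K Γ)

/-- Defining relations of the classical shadow. -/
inductive Arel (q : Fin (2 * d) → Fin (2 * d) → Kˣ) :
    FreeAlgebra K (Yp d) → FreeAlgebra K (Yp d) → Prop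
  | rel (Γ Γ' : Yp d) :
      Arel q (FreeAlgebra.ι K Γ * FreeAlgebra.ι K Γ')
        (((qT q Γ'.1 Γ.1 : Kˣ) : K) • (FreeAlgebra.ι K Γ' * FreeAlgebra.ι K Γ))

/-- The classical shadow `A`. -/
abbrev A (q : Fin (2 * d) → Fin (2 * d) → Kˣ) := RingQuot (Arel (K := K) q)

/-- The generators `h_Γ` of the classical shadow. -/
def hA (q : Fin (2 * d) → Fin (2 * d) → Kˣ) (Γ : Yp d) : A q :=
  RingQuot.mkAlgHom K (Arel q) (FreeAlgebra.ι K Γ)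

/-- A weakly decreasing list of trees: `Γ₁ ⪰ Γ₂ ⪰ … ⪰ Γ_n`. -/
def DecChain {d : ℕ} (l : List (Yp d)) : Prop := l.Chain' fun a b => mge a.1 b.1

/-- Total degree of a list of trees. -/
def degList {d : ℕ} (l : List (M d)) : ℕ := (l.map fun Γ => leaves Γ - 1).sum

/-- The decreasing filtration `F` on `E`. -/
def Ffil (q : Fin (2 * d) → Fin (2 * d) → Kˣ) (n : ℕ) : Submodule K (E q) :=
  Submodule.span K {x | ∃ l : List (M d), n ≤ degList l ∧ x = (l.map (hbar q)).prod}

/-- Homogeneous component of degree `D` of the classical shadow. -/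
def Adeg (q : Fin (2 * d) → Fin (2 * d) → Kˣ) (D : ℕ) : Submodule K (A q) :=
  Submodule.span K {x | ∃ l : List (Yp d),
    DecChain l ∧ degList (l.map (·.1)) = D ∧ x = (l.map (hA q)).prod}

/-- The braiding coefficient `q(Γ̃, σ)`. -/
def qPerm (q : Fin (2 * d) → Fin (2 * d) → Kˣ) {n : ℕ} (Γ : Fin n → M d)
    (σ : Equiv.Perm (Fin n)) : Kˣ :=
  ∏ p ∈ Finset.univ.filter
      (fun p : Fin n × Fin n => p.1 < p.2 ∧ σ.symm p.2 < σ.symm p.1),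
    qT q (Γ p.1) (Γ p.2)

/-- The partition function `Z_n(Γ̃)`. -/
def Zfun (q : Fin (2 * d) → Fin (2 * d) → Kˣ) {n : ℕ} (Γ : Fin n → M d) : K :=
  ∑ σ : Equiv.Perm (Fin n), ((qPerm q Γ σ : Kˣ) : K) ^ 2

/-! ### Auxiliary lemmas -/

section AuxLemmas

@[simp] lemma leaves_of' {α : Type*} (i : α) : leaves (FreeMagma.of i) = 1 := rfl
@[simp] lemma leaves_mul' {α : Type*} (a b : FreeMagma α) :
    leaves (a * b) = leaves a + leaves b := rfl
@[simp] lemma leafList_of' {α : Type*} (i : α) : leafList (FreeMagma.of i) = [i] := rfl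
@[simp] lemma leafList_mul' {α : Type*} (a b : FreeMagma α) :
    leafList (a * b) = leafList a ++ leafList b := rfl

lemma mlt_of_of' {d : ℕ} {i j : Fin (2*d)} : mlt (FreeMagma.of i) (FreeMagma.of j) ↔ i < j :=
  Iff.rfl
lemma mlt_of_mul' {d : ℕ} {i : Fin (2*d)} {a b : M d} : mlt (FreeMagma.of i) (a * b) :=
  trivial
lemma not_mlt_mul_of' {d : ℕ} {i : Fin (2*d)} {a b : M d} : ¬ mlt (a * b) (FreeMagma.of i) :=
  id

lemma leaves_pos' {α : Type*} (a : FreeMagma α) : 1 ≤ leaves a := by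
  induction a with
  | ih1 i => simp
  | ih2 a b iha ihb => simp only [leaves_mul']; omega

lemma leaves_eq_length' {α : Type*} (a : FreeMagma α) : leaves a = (leafList a).length := by
  induction a with
  | ih1 i => rfl
  | ih2 a b iha ihb => simp [iha, ihb]

lemma mlt_irrefl' {d : ℕ} (a : M d) : ¬ mlt a a := by
  induction a with
  | of i => simp [mlt_of_of']
  | mul a b iha ihb =>
      intro h
      rcases h with h | ⟨_, h | ⟨_, h⟩⟩
      · omega
      · exact iha h
      · exact ihb h

lemma mlt_asymm' {d : ℕ} {a b : M d} (h : mlt a b) : ¬ mlt b a := by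
  induction a generalizing b with
  | of i =>
      cases b with
      | of j => rw [mlt_of_of'] at h ⊢; omega
      | mul c e => exact not_mlt_mul_of'
  | mul a₁ a₂ ih₁ ih₂ =>
      cases b with
      | of j => exact absurd h not_mlt_mul_of'
      | mul c e =>
          intro h'
          rcases h with h | ⟨he, h | ⟨rfl, h⟩⟩ <;>
            rcases h' with h' | ⟨he', h' | ⟨req, h'⟩⟩
          · omega
          · omega
          · omega
          · omega
          · exact ih₁ h h'
          · exact mlt_irrefl' a₁ (req ▸ h)
          · omega
          · exact mlt_irrefl' a₁ h'
          · exact ih₂ h h'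

lemma mlt_tri' {d : ℕ} (a b : M d) : mlt a b ∨ a = b ∨ mlt b a := by
  induction a generalizing b with
  | of i =>
      cases b with
      | of j =>
          rcases lt_trichotomy i j with h | h | h
          · exact Or.inl h
          · exact Or.inr (Or.inl (by rw [h]))
          · exact Or.inr (Or.inr h)
      | mul c e => exact Or.inl mlt_of_mul'
  | mul a₁ a₂ ih₁ ih₂ =>
      cases b with
      | of j => exact Or.inr (Or.inr mlt_of_mul')
      | mul c e =>
          rcases Nat.lt_trichotomy (leaves (a₁ * a₂)) (leaves (c * e)) with hl | hl | hl
          · exact Or.inl (Or.inl hl)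
          · rcases ih₁ c with h | rfl | h
            · exact Or.inl (Or.inr ⟨hl, Or.inl h⟩)
            · rcases ih₂ e with h | rfl | h
              · exact Or.inl (Or.inr ⟨hl, Or.inr ⟨rfl, h⟩⟩)
              · exact Or.inr (Or.inl rfl)
              · exact Or.inr (Or.inr (Or.inr ⟨hl.symm, Or.inr ⟨rfl, h⟩⟩))
            · exact Or.inr (Or.inr (Or.inr ⟨hl.symm, Or.inl h⟩))
          · exact Or.inr (Or.inr (Or.inl hl))

/-- Inversion count of a list of trees. -/
def invc {d : ℕ} : List (M d) → ℕ
  | [] => 0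
  | x :: t => (t.countP fun y => decide (mlt x y)) + invc t

lemma invc_le {d : ℕ} (l : List (M d)) : invc l ≤ l.length * l.length := by
  induction l with
  | nil => simp [invc]
  | cons x t ih =>
      have h1 : (t.countP fun y => decide (mlt x y)) ≤ t.length := List.countP_le_length
      simp only [invc, List.length_cons]
      nlinarith

lemma invc_swap {d : ℕ} {x y : M d} (h : mlt x y) (l₁ l₂ : List (M d)) :
    invc (l₁ ++ y :: x :: l₂) < invc (l₁ ++ x :: y :: l₂) := by
  induction l₁ with
  | nil =>
      have hx : decide (mlt x y) = true := by simp [h]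
      have hy' : decide (mlt y x) = false := by
        simp only [decide_eq_false_iff_not]; exact mlt_asymm' h
      simp only [List.nil_append, invc, List.countP_cons, hx, hy', List.append_eq,
        Bool.false_eq_true, if_true, if_false]
      omega
  | cons a t ih =>
      have hperm : (t ++ y :: x :: l₂).Perm (t ++ x :: y :: l₂) :=
        List.Perm.append_left t (List.Perm.swap _ _ _)
      simp only [List.cons_append, invc, hperm.countP_eq, List.append_eq]
      omega

lemma exists_bad_pair {α : Type*} {R : α → α → Prop} :
    ∀ l : List α, ¬ l.Chain' R → ∃ l₁ a b l₂, l = l₁ ++ a :: b :: l₂ ∧ ¬ R a b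
  | [], h => absurd List.isChain_nil h
  | [a], h => absurd (List.isChain_singleton a) h
  | a :: b :: t, h => by
      rw [List.Chain', List.isChain_cons_cons] at h
      push_neg at h
      by_cases hab : R a b
      · obtain ⟨l₁, c, e, l₂, heq, hce⟩ := exists_bad_pair (b :: t) (h hab)
        exact ⟨a :: l₁, c, e, l₂, by rw [heq]; rfl, hce⟩
      · exact ⟨[], a, b, t, rfl, hab⟩

variable {d : ℕ} {K : Type*} [CommRing K]

lemma qT_mul_left (q : Fin (2 * d) → Fin (2 * d) → Kˣ) (a b c : M d) :
    qT q (a * b) c = qT q a c * qT q b c := by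
  simp [qT, List.map_append, List.prod_append]

lemma qT_mul_right (q : Fin (2 * d) → Fin (2 * d) → Kˣ) (a b c : M d) :
    qT q c (a * b) = qT q c a * qT q c b := by
  simp [qT, List.map_append, List.prod_append, List.prod_map_mul]

lemma qT_of_of (q : Fin (2 * d) → Fin (2 * d) → Kˣ) (i j : Fin (2 * d)) :
    qT q (FreeMagma.of i) (FreeMagma.of j) = q i j := by
  simp [qT]

lemma qT_symm (q : Fin (2 * d) → Fin (2 * d) → Kˣ) (hq2 : ∀ i j, q i j * q j i = 1)
    (a b : M d) : qT q a b * qT q b a = 1 := by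
  induction a generalizing b with
  | of i =>
      induction b with
      | of j => rw [qT_of_of, qT_of_of]; exact hq2 i j
      | mul b₁ b₂ ih₁ ih₂ =>
          rw [FreeMagma.mul_eq, qT_mul_right, qT_mul_left, mul_mul_mul_comm, ih₁, ih₂, mul_one]
  | mul a₁ a₂ ih₁ ih₂ =>
      rw [FreeMagma.mul_eq, qT_mul_left, qT_mul_right, mul_mul_mul_comm, ih₁, ih₂, mul_one]

lemma qT_self (q : Fin (2 * d) → Fin (2 * d) → Kˣ) (hq1 : ∀ i, q i i = 1)
    (hq2 : ∀ i j, q i j * q j i = 1) (a : M d) : qT q a a = 1 := by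
  induction a with
  | of i => rw [qT_of_of]; exact hq1 i
  | mul a b iha ihb =>
      rw [FreeMagma.mul_eq, qT_mul_left, qT_mul_right, qT_mul_right, iha, ihb, one_mul, mul_one,
        qT_symm q hq2]

lemma qT_perm_left (q : Fin (2 * d) → Fin (2 * d) → Kˣ) {a a' : M d}
    (h : (leafList a).Perm (leafList a')) (c : M d) : qT q a c = qT q a' c :=
  (h.map _).prod_eq

lemma qT_perm_right (q : Fin (2 * d) → Fin (2 * d) → Kˣ) {c c' : M d}
    (h : (leafList c).Perm (leafList c')) (a : M d) : qT q a c = qT q a c' := by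
  have he : (fun i => ((leafList c).map (q i)).prod) =
      fun i => ((leafList c').map (q i)).prod :=
    funext fun i => (h.map (q i)).prod_eq
  rw [qT, qT, he]

end AuxLemmas


section AlgebraLemmas

variable {d : ℕ} {K : Type*} [CommRing K]

lemma hbar_rel (q : Fin (2 * d) → Fin (2 * d) → Kˣ) (Γ Γ' : M d) :
    hbar q Γ * hbar q Γ' =
      ((qT q Γ' Γ : Kˣ) : K) • (hbar q Γ' * hbar q Γ) + hbar q (Γ * Γ') := by
  have h := RingQuot.mkAlgHom_rel K (Erel.rel (q := q) Γ Γ')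
  simpa [hbar, map_mul, map_add, map_smul] using h

lemma hbar_eq_sub (q : Fin (2 * d) → Fin (2 * d) → Kˣ) (Γ Γ' : M d) :
    hbar q (Γ * Γ') =
      hbar q Γ * hbar q Γ' - ((qT q Γ' Γ : Kˣ) : K) • (hbar q Γ' * hbar q Γ) := by
  rw [hbar_rel q Γ Γ', add_sub_cancel_left]

/-- `ℏ_{Γ*Γ} = 0` for the symmetric coefficient. -/
lemma hbar_sq_zero (q : Fin (2 * d) → Fin (2 * d) → Kˣ) (hq1 : ∀ i, q i i = 1)
    (hq2 : ∀ i j, q i j * q j i = 1) (Γ : M d) : hbar q (Γ * Γ) = 0 := by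
  have h := hbar_rel q Γ Γ
  rw [qT_self q hq1 hq2, Units.val_one, one_smul, left_eq_add] at h
  exact h

/-- `ℏ_{Γ*Γ'} = -q_{Γ',Γ}·ℏ_{Γ'*Γ}`. -/
lemma hbar_swap (q : Fin (2 * d) → Fin (2 * d) → Kˣ) (hq2 : ∀ i j, q i j * q j i = 1)
    (Γ Γ' : M d) :
    hbar q (Γ * Γ') = (-((qT q Γ' Γ : Kˣ) : K)) • hbar q (Γ' * Γ) := by
  have h1 := hbar_rel q Γ Γ'
  have h2 := hbar_rel q Γ' Γ
  rw [h2, smul_add, smul_smul] at h1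
  have hcc : ((qT q Γ' Γ : Kˣ) : K) * ((qT q Γ Γ' : Kˣ) : K) = 1 := by
    rw [← Units.val_mul, qT_symm q hq2, Units.val_one]
  rw [hcc, one_smul, add_assoc, left_eq_add] at h1
  exact (eq_neg_of_add_eq_zero_right h1).trans (neg_smul _ _).symm

/-- The bilinear map `(u, v) ↦ u*v - c•(v*u)`. -/
def mulSub (q : Fin (2 * d) → Fin (2 * d) → Kˣ) (c : K) :
    E (K := K) q →ₗ[K] E (K := K) q →ₗ[K] E (K := K) q :=
  LinearMap.mul K (E (K := K) q) + (-c) • (LinearMap.mul K (E (K := K) q)).flip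

@[simp] lemma mulSub_apply (q : Fin (2 * d) → Fin (2 * d) → Kˣ) (c : K)
    (u v : E (K := K) q) : mulSub q c u v = u * v - c • (v * u) := by
  simp [mulSub, LinearMap.sub_apply, LinearMap.smul_apply, LinearMap.mul_apply',
    LinearMap.flip_apply, sub_eq_add_neg, neg_smul]

/-- The set of admissible Planck constants with the same leaf multiset as `Γ`. -/
def SA (q : Fin (2 * d) → Fin (2 * d) → Kˣ) (Γ : M d) : Set (E (K := K) q) :=
  {x | ∃ Δ : M d, Yplus Δ ∧ (leafList Δ).Perm (leafList Γ) ∧ x = hbar q Δ}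

/-- Lemma A: every `ℏ_Γ` lies in the span of admissible `ℏ_Δ` with the
same leaf multiset. -/
lemma hbar_mem_spanSA (q : Fin (2 * d) → Fin (2 * d) → Kˣ) (hq1 : ∀ i, q i i = 1)
    (hq2 : ∀ i j, q i j * q j i = 1) (Γ : M d) :
    hbar q Γ ∈ Submodule.span K (SA q Γ) := by
  induction Γ with
  | of i =>
      exact Submodule.subset_span ⟨FreeMagma.of i, Yplus.of i, List.Perm.refl _, rfl⟩
  | mul a b iha ihb =>
      rw [FreeMagma.mul_eq]
      set c : K := ((qT q b a : Kˣ) : K) with hc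
      have hx : hbar q (a * b) = mulSub q c (hbar q a) (hbar q b) := by
        rw [mulSub_apply, hbar_eq_sub]
      rw [hx]
      have hmem : mulSub q c (hbar q a) (hbar q b) ∈
          Submodule.map₂ (mulSub q c) (Submodule.span K (SA q a))
            (Submodule.span K (SA q b)) :=
        Submodule.apply_mem_map₂ _ iha ihb
      rw [Submodule.map₂_span_span] at hmem
      refine Submodule.span_le.2 ?_ hmem
      rintro x ⟨u, ⟨Δa, hYa, hpa, rfl⟩, v, ⟨Δb, hYb, hpb, rfl⟩, rfl⟩
      have hcc : c = ((qT q Δb Δa : Kˣ) : K) := by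
        rw [hc, qT_perm_left q hpb.symm, qT_perm_right q hpa.symm]
      have hval : mulSub q c (hbar q Δa) (hbar q Δb) = hbar q (Δa * Δb) := by
        rw [mulSub_apply, hcc, ← hbar_eq_sub]
      show mulSub q c (hbar q Δa) (hbar q Δb) ∈
        (Submodule.span K (SA q (a * b)) : Set (E (K := K) q))
      rw [hval]
      have hperm : (leafList (Δa * Δb)).Perm (leafList (a * b)) := by
        rw [leafList_mul', leafList_mul']
        exact hpa.append hpb
      rcases mlt_tri' Δa Δb with h | rfl | h
      · exact Submodule.subset_span ⟨Δa * Δb, Yplus.mul hYa hYb h, hperm, rfl⟩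
      · rw [hbar_sq_zero q hq1 hq2]
        exact Submodule.zero_mem _
      · rw [hbar_swap q hq2 Δa Δb]
        refine Submodule.smul_mem _ _ (Submodule.subset_span ?_)
        refine ⟨Δb * Δa, Yplus.mul hYb hYa h, ?_, rfl⟩
        rw [leafList_mul', leafList_mul']
        exact (List.perm_append_comm).trans (hpa.append hpb)

end AlgebraLemmas


section Straightening

variable {d : ℕ} {K : Type*} [CommRing K]

/-- The span of ordered admissible monomials of degree at least `n`. -/
def Ssub (q : Fin (2 * d) → Fin (2 * d) → Kˣ) (n : ℕ) : Submodule K (E (K := K) q) :=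
  Submodule.span K {x : E (K := K) q | ∃ l : List (Yp d),
    DecChain l ∧ n ≤ degList (l.map (·.1)) ∧
      x = (l.map fun Γ => hbar q Γ.1).prod}

lemma Ssub_antitone (q : Fin (2 * d) → Fin (2 * d) → Kˣ) {m n : ℕ} (h : m ≤ n) :
    Ssub q n ≤ Ssub (K := K) q m :=
  Submodule.span_mono (fun _ ⟨l, hc, hd, hx⟩ => ⟨l, hc, h.trans hd, hx⟩)

lemma degList_cons (Γ : M d) (t : List (M d)) :
    degList (Γ :: t) = (leaves Γ - 1) + degList t := by simp [degList]

lemma degList_append (l₁ l₂ : List (M d)) :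
    degList (l₁ ++ l₂) = degList l₁ + degList l₂ := by simp [degList]

lemma degList_perm {l₁ l₂ : List (M d)} (h : l₁.Perm l₂) : degList l₁ = degList l₂ :=
  (h.map _).sum_eq

/-- Straightening: any monomial in admissible generators lies in the span of ordered
admissible monomials of at least the same degree. -/
lemma prod_mem_Ssub (q : Fin (2 * d) → Fin (2 * d) → Kˣ) :
    ∀ N : ℕ, ∀ l : List (Yp d), l.length ^ 3 + invc (l.map (·.1)) < N →
      (l.map fun Γ => hbar q Γ.1).prod ∈ Ssub (K := K) q (degList (l.map (·.1))) := by
  intro N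
  induction N with
  | zero => intro l h; omega
  | succ N ih =>
      intro l hm
      by_cases hC : DecChain l
      · exact Submodule.subset_span ⟨l, hC, le_refl _, rfl⟩
      · obtain ⟨l₁, x, y, l₂, heq, hxy⟩ := exists_bad_pair l hC
        subst heq
        have hmlt : mlt x.1 y.1 := by
          rcases mlt_tri' x.1 y.1 with h | h | h
          · exact h
          · exact absurd (Or.inr h) hxy
          · exact absurd (Or.inl h) hxy
        have hlen : ∀ z : Yp d, ∀ w : Yp d, ∀ L : List (Yp d),
            (l₁ ++ z :: w :: L).length = l₁.length + L.length + 2 := by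
          intro z w L; simp [List.length_append]; omega
        set z : Yp d := ⟨x.1 * y.1, Yplus.mul x.2 y.2 hmlt⟩ with hz
        have key : ((l₁ ++ x :: y :: l₂).map fun Γ => hbar q Γ.1).prod =
            ((qT q y.1 x.1 : Kˣ) : K) •
                ((l₁ ++ y :: x :: l₂).map fun Γ => hbar q Γ.1).prod +
              ((l₁ ++ z :: l₂).map fun Γ => hbar q Γ.1).prod := by
          simp only [List.map_append, List.map_cons, List.prod_append, List.prod_cons]
          rw [← mul_assoc (hbar q x.1), hbar_rel q x.1 y.1]
          simp only [add_mul, mul_add, smul_mul_assoc, mul_smul_comm, mul_assoc]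
          rfl
        rw [key]
        refine Submodule.add_mem _ (Submodule.smul_mem _ _ ?_) ?_
        · -- swap term
          have hperm : ((l₁ ++ y :: x :: l₂).map (·.1)).Perm
              ((l₁ ++ x :: y :: l₂).map (·.1)) := by
            simp only [List.map_append, List.map_cons]
            exact List.Perm.append_left _ (List.Perm.swap _ _ _)
          have hmeas : (l₁ ++ y :: x :: l₂).length ^ 3 +
              invc ((l₁ ++ y :: x :: l₂).map (·.1)) < N := by
            have hsw : invc ((l₁ ++ y :: x :: l₂).map (·.1)) <
                invc ((l₁ ++ x :: y :: l₂).map (·.1)) := by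
              simpa only [List.map_append, List.map_cons] using
                invc_swap hmlt (l₁.map (·.1)) (l₂.map (·.1))
            rw [hlen y x l₂]
            rw [hlen x y l₂] at hm
            omega
          have := ih (l₁ ++ y :: x :: l₂) hmeas
          rwa [degList_perm hperm] at this
        · -- merge term
          refine Ssub_antitone q ?_ (ih (l₁ ++ z :: l₂) ?_)
          · simp only [List.map_append, List.map_cons, degList_append, degList_cons, hz]
            have h1 := leaves_pos' x.1
            have h2 := leaves_pos' y.1
            simp only [leaves_mul']
            omega
          · have hb := invc_le ((l₁ ++ z :: l₂).map (·.1))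
            have hlen2 : (l₁ ++ z :: l₂).length = l₁.length + l₂.length + 1 := by
              simp [List.length_append]; omega
            have hlenm : ((l₁ ++ z :: l₂).map (·.1)).length = l₁.length + l₂.length + 1 := by
              simp [List.length_append]; omega
            rw [hlen x y l₂] at hm
            rw [hlen2]
            rw [hlenm] at hb
            set a := l₁.length + l₂.length
            have hcube : (a + 1) ^ 3 + (a + 1) * (a + 1) < (a + 2) ^ 3 := by nlinarith
            have hN : (a + 2) ^ 3 ≤ N := by omega
            omega

/-- Any monomial in the `ℏ_Γ` lies in the span of ordered admissible monomials of
at least the same degree. -/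
lemma prodM_mem_Ssub (q : Fin (2 * d) → Fin (2 * d) → Kˣ) (hq1 : ∀ i, q i i = 1)
    (hq2 : ∀ i j, q i j * q j i = 1) (l : List (M d)) :
    (l.map (hbar q)).prod ∈ Ssub (K := K) q (degList l) := by
  induction l with
  | nil =>
      refine Submodule.subset_span ⟨[], List.isChain_nil, ?_, by simp⟩
      simp [degList]
  | cons Γ t ih =>
      simp only [List.map_cons, List.prod_cons, degList_cons]
      have h1 := hbar_mem_spanSA q hq1 hq2 Γ
      have h2 : (t.map (hbar q)).prod ∈ Ssub (K := K) q (degList t) := ih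
      have hmul : hbar q Γ * (t.map (hbar q)).prod ∈
          Submodule.span K (SA q Γ) * Ssub (K := K) q (degList t) :=
        Submodule.mul_mem_mul h1 h2
      rw [Ssub, Submodule.span_mul_span] at hmul
      refine Submodule.span_le.2 ?_ hmul
      rintro w ⟨u, ⟨Δ, hY, hp, rfl⟩, v, ⟨l', hc', hd', rfl⟩, rfl⟩
      have hDeq : leaves Δ = leaves Γ := by
        rw [leaves_eq_length', leaves_eq_length', hp.length_eq]
      have hval : hbar q Δ * (l'.map fun Γ => hbar q Γ.1).prod =
          (((⟨Δ, hY⟩ : Yp d) :: l').map fun Γ => hbar q Γ.1).prod := by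
        simp
      show hbar q Δ * (l'.map fun Γ => hbar q Γ.1).prod ∈
        (Ssub (K := K) q (leaves Γ - 1 + degList t) : Set (E (K := K) q))
      rw [hval]
      have hmem := prod_mem_Ssub q
        ((((⟨Δ, hY⟩ : Yp d) :: l').length ^ 3 +
          invc ((((⟨Δ, hY⟩ : Yp d) :: l').map (·.1)))) + 1)
        ((⟨Δ, hY⟩ : Yp d) :: l') (Nat.lt_succ_self _)
      refine Ssub_antitone q ?_ hmem
      simp only [List.map_cons, degList_cons, hDeq]
      omega

end Straightening


/-- the filtration submodule `Fⁿ` is spanned by the ordered basis monomials of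
degree at least `n`, and `F` is a decreasing algebra filtration: `Fᵐ·Fⁿ ⊆ F^{m+n}`. -/
theorem statement2 (d : ℕ) (hd : 1 ≤ d) (K : Type*) [CommRing K]
    (q : Fin (2 * d) → Fin (2 * d) → Kˣ)
    (hq1 : ∀ i, q i i = 1) (hq2 : ∀ i j, q i j * q j i = 1) :
    (∀ n : ℕ, Ffil (K := K) q n =
        Submodule.span K {x : E (K := K) q | ∃ l : List (Yp d),
          DecChain l ∧ n ≤ degList (l.map (·.1)) ∧
            x = (l.map fun Γ => hbar q Γ.1).prod}) ∧
      (∀ m n : ℕ, ∀ x y : E (K := K) q,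
        x ∈ Ffil (K := K) q m → y ∈ Ffil (K := K) q n →
          x * y ∈ Ffil (K := K) q (m + n)) := by
  constructor
  · intro n
    apply le_antisymm
    · refine Submodule.span_le.2 ?_
      rintro x ⟨l, hd, rfl⟩
      exact Ssub_antitone q hd (prodM_mem_Ssub q hq1 hq2 l)
    · refine Submodule.span_le.2 ?_
      rintro x ⟨l, hc, hd, rfl⟩
      refine Submodule.subset_span ⟨l.map (·.1), hd, ?_⟩
      simp [List.map_map]
  · intro m n x y hx hy
    have hle : Ffil (K := K) q m * Ffil (K := K) q n ≤ Ffil (K := K) q (m + n) := by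
      rw [Ffil, Ffil, Submodule.span_mul_span]
      refine Submodule.span_le.2 ?_
      rintro w ⟨u, ⟨l, hdl, rfl⟩, v, ⟨l', hdl', rfl⟩, rfl⟩
      refine Submodule.subset_span ⟨l ++ l', ?_, ?_⟩
      · rw [degList_append]; omega
      · simp [List.map_append, List.prod_append]
    exact hle (Submodule.mul_mem_mul hx hy)

end NC
end
end

section
/- Define a product ⋆ on A by f ⋆ g := φ⁻¹(φ(f)·φ(g)). Then for every N ≥ 1, every 1 ≤ m ≤ N, and all Γ₁, …, Γ_N ∈ Y⁺ with Γ₁ ⪰ … ⪰ Γ_m and Γ_{m+1} ⪰ … ⪰ Γ_N, one has (h_{Γ₁}⋯h_{Γ_m}) ⋆ (h_{Γ_{m+1}}⋯h_{Γ_N}) = h_{Γ₁} ⋆ h_{Γ₂} ⋆ … ⋆ h_{Γ_N} (the iterated, left-associated ⋆-product of the generators). -/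
open scoped Classical

noncomputable section

namespace NC

variable {d : ℕ} {K : Type*} [CommRing K]

/-- with `⋆` induced on the classical shadow via the normal quantization `φ`
(`f ⋆ g := φ⁻¹(φ f · φ g)`), the `⋆`-product of two ordered basis monomials equals the
iterated (left-associated) `⋆`-product of the generators. -/
theorem statement4 (d : ℕ) (hd : 1 ≤ d) (K : Type*) [CommRing K]
    (q : Fin (2 * d) → Fin (2 * d) → Kˣ)
    (hq1 : ∀ i, q i i = 1) (hq2 : ∀ i j, q i j * q j i = 1)
    (φ : A (K := K) q ≃ₗ[K] E (K := K) q)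
    (hφ : ∀ l : List (Yp d), DecChain l →
      φ ((l.map (hA q)).prod) = (l.map fun Γ => hbar q Γ.1).prod)
    (N m : ℕ) (hm : 1 ≤ m) (hmN : m ≤ N) (Γ : Fin N → Yp d)
    (hdec : ∀ i j : Fin N, i ≤ j → ((j : ℕ) < m ∨ m ≤ (i : ℕ)) →
      mge (Γ i).1 (Γ j).1) :
    φ.symm (φ (((List.ofFn fun i => hA (K := K) q (Γ i)).take m).prod) *
        φ (((List.ofFn fun i => hA (K := K) q (Γ i)).drop m).prod)) =
      (List.ofFn fun i => hA (K := K) q (Γ i)).foldl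
        (fun x y => φ.symm (φ x * φ y)) 1 := by
  -- φ sends 1 to 1 and generators to generators
  have h1 : φ (1 : A (K := K) q) = 1 := by
    have := hφ [] (by simp [DecChain, List.Chain'])
    simpa using this
  have hgen : ∀ Γ' : Yp d, φ (hA (K := K) q Γ') = hbar q Γ'.1 := by
    intro Γ'
    have := hφ [Γ'] (by simp [DecChain, List.Chain'])
    simpa using this
  -- folding the star product
  have hfold : ∀ (l : List (A (K := K) q)) (x : A (K := K) q),
      φ (l.foldl (fun a b => φ.symm (φ a * φ b)) x)
        = φ x * (l.map fun y => φ y).prod := by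
    intro l
    induction l with
    | nil => intro x; simp
    | cons a t ih =>
        intro x
        simp only [List.foldl_cons, List.map_cons, List.prod_cons, ih,
          LinearEquiv.apply_symm_apply, mul_assoc]
  set L : List (Yp d) := List.ofFn Γ with hLdef
  have hLlen : L.length = N := by simp [hLdef]
  have hchain_take : DecChain (L.take m) := by
    unfold DecChain List.Chain'
    rw [List.isChain_iff_getElem]
    intro i hi
    have hlen' : (L.take m).length = m := by
      simp [hLdef]; omega
    rw [hlen'] at hi
    have h1' : i < N := by omega
    have h2' : i + 1 < N := by omega
    have e1 : (L.take m)[i]'(by omega) = Γ ⟨i, h1'⟩ := by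
      simp [List.get_eq_getElem, List.getElem_take, hLdef, List.getElem_ofFn]
    have e2 : (L.take m)[i + 1]'(by omega) = Γ ⟨i + 1, h2'⟩ := by
      simp [List.get_eq_getElem, List.getElem_take, hLdef, List.getElem_ofFn]
    rw [e1, e2]
    exact hdec ⟨i, h1'⟩ ⟨i + 1, h2'⟩ (by simp) (Or.inl (by simp only [Fin.val_mk]; omega))
  have hchain_drop : DecChain (L.drop m) := by
    unfold DecChain List.Chain'
    rw [List.isChain_iff_getElem]
    intro i hi
    have hlen' : (L.drop m).length = N - m := by
      simp [hLdef]
    rw [hlen'] at hi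
    have h1' : m + i < N := by omega
    have h2' : m + (i + 1) < N := by omega
    have e1 : (L.drop m)[i]'(by omega) = Γ ⟨m + i, h1'⟩ := by
      simp [List.get_eq_getElem, List.getElem_drop, hLdef, List.getElem_ofFn]
    have e2 : (L.drop m)[i + 1]'(by omega) = Γ ⟨m + (i + 1), h2'⟩ := by
      simp [List.get_eq_getElem, List.getElem_drop, hLdef, List.getElem_ofFn]
    rw [e1, e2]
    exact hdec ⟨m + i, h1'⟩ ⟨m + (i + 1), h2'⟩ (by simp) (Or.inr (by simp only [Fin.val_mk]; omega))
  have hLm : (List.ofFn fun i => hA (K := K) q (Γ i)) = L.map (hA q) :=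
    (List.map_ofFn (f := Γ) (g := hA q)).symm
  rw [hLm, LinearEquiv.symm_apply_eq, hfold _ 1, h1, one_mul,
    ← List.map_take, ← List.map_drop, hφ _ hchain_take, hφ _ hchain_drop,
    ← List.prod_append, ← List.map_append, List.take_append_drop,
    List.map_map]
  congr 1
  apply List.map_congr_left
  intro a _
  exact (hgen a).symm

end NC
end
end

section
/- For all σ, τ ∈ S_n, q_Q(σ∘τ) = q_Q(σ)·q_{Q^σ}(τ); in particular, taking τ = σ⁻¹, one gets q_Q(σ)⁻¹ = q_{Q^σ}(σ⁻¹). -/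
open scoped Classical

noncomputable section

namespace NC

/-- The cocycle `q_Q(σ)` attached to a map `Q : Fin n → Fin n → G` and a permutation `σ`:
the product of `Q i j` over all pairs `i < j` inverted by `σ⁻¹`. -/
def qQ {G : Type*} [CommGroup G] {n : ℕ} (Q : Fin n → Fin n → G)
    (σ : Equiv.Perm (Fin n)) : G :=
  ∏ p ∈ Finset.univ.filter
      (fun p : Fin n × Fin n => p.1 < p.2 ∧ σ.symm p.2 < σ.symm p.1),
    Q p.1 p.2

/-- The finset of strictly increasing pairs. -/
def Pn (n : ℕ) : Finset (Fin n × Fin n) :=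
  Finset.univ.filter (fun p => p.1 < p.2)

/-- Apply a permutation to a pair and reorder increasingly. -/
def ordp {n : ℕ} (σ : Equiv.Perm (Fin n)) (p : Fin n × Fin n) : Fin n × Fin n :=
  if σ p.1 < σ p.2 then (σ p.1, σ p.2) else (σ p.2, σ p.1)

lemma ordp_mem {n : ℕ} (σ : Equiv.Perm (Fin n)) {p : Fin n × Fin n}
    (hp : p ∈ Pn n) : ordp σ p ∈ Pn n := by
  simp only [Pn, Finset.mem_filter, Finset.mem_univ, true_and] at hp ⊢
  unfold ordp
  rcases lt_trichotomy (σ p.1) (σ p.2) with h | h | h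
  · rw [if_pos h]; exact h
  · exact absurd (σ.injective h) (ne_of_lt hp)
  · rw [if_neg (not_lt.2 h.le)]; exact h

lemma ordp_ordp {n : ℕ} (σ : Equiv.Perm (Fin n)) {p : Fin n × Fin n}
    (hp : p ∈ Pn n) : ordp σ⁻¹ (ordp σ p) = p := by
  simp only [Pn, Finset.mem_filter, Finset.mem_univ, true_and] at hp
  unfold ordp
  rcases lt_trichotomy (σ p.1) (σ p.2) with h | h | h
  · rw [if_pos h]
    simp [hp, not_lt.2 hp.le]
  · exact absurd (σ.injective h) (ne_of_lt hp)
  · rw [if_neg (not_lt.2 h.le)]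
    simp [not_lt.2 hp.le]

lemma ordp_ordp' {n : ℕ} (σ : Equiv.Perm (Fin n)) {p : Fin n × Fin n}
    (hp : p ∈ Pn n) : ordp σ (ordp σ⁻¹ p) = p := by
  simpa using ordp_ordp σ⁻¹ hp

/-- Reindexing a product over increasing pairs by `ordp σ`. -/
lemma prod_ordp {G : Type*} [CommGroup G] {n : ℕ} (σ : Equiv.Perm (Fin n))
    (f : Fin n × Fin n → G) :
    ∏ p ∈ Pn n, f (ordp σ p) = ∏ p ∈ Pn n, f p := by
  refine Finset.prod_nbij' (ordp σ) (ordp σ⁻¹) (fun a ha => ordp_mem σ ha)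
    (fun a ha => ordp_mem σ⁻¹ ha) (fun a ha => ordp_ordp σ ha)
    (fun a ha => ordp_ordp' σ ha) (fun a ha => rfl)

lemma qQ_eq {G : Type*} [CommGroup G] {n : ℕ} (Q : Fin n → Fin n → G)
    (σ : Equiv.Perm (Fin n)) :
    qQ Q σ = ∏ p ∈ Pn n, (if σ p.2 < σ p.1 then Q (σ p.2) (σ p.1) else 1) := by
  unfold qQ
  have h1 : (Finset.univ.filter
      (fun p : Fin n × Fin n => p.1 < p.2 ∧ σ.symm p.2 < σ.symm p.1)) =
      (Pn n).filter (fun p => σ.symm p.2 < σ.symm p.1) := by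
    simp [Pn, Finset.filter_filter]
  rw [h1, Finset.prod_filter]
  refine (Finset.prod_nbij' (ordp σ⁻¹) (ordp σ) (fun a ha => ordp_mem σ⁻¹ ha)
    (fun a ha => ordp_mem σ ha) (fun a ha => ordp_ordp' σ ha)
    (fun a ha => ordp_ordp σ ha) ?_)
  intro p hp
  simp only [Pn, Finset.mem_filter, Finset.mem_univ, true_and] at hp
  unfold ordp
  rcases lt_trichotomy (σ⁻¹ p.1) (σ⁻¹ p.2) with h | h | h
  · rw [if_pos h]
    have h2 : ¬ (σ.symm p.2 < σ.symm p.1) := not_lt.2 h.le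
    simp only [Equiv.Perm.inv_def] at h ⊢
    simp [h2, not_lt.2 hp.le]
  · exact absurd (σ⁻¹.injective h) (ne_of_lt hp)
  · rw [if_neg (not_lt.2 h.le)]
    have h2 : σ.symm p.2 < σ.symm p.1 := h
    simp only [Equiv.Perm.inv_def] at h ⊢
    simp [h2, hp, Equiv.apply_symm_apply]

/-- `q_Q(σ∘τ) = q_Q(σ)·q_{Q^σ}(τ)`, and in particular
`q_Q(σ)⁻¹ = q_{Q^σ}(σ⁻¹)`. -/
theorem statement10 {G : Type*} [CommGroup G] (n : ℕ) (hn : 1 ≤ n)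
    (Q : Fin n → Fin n → G) (hQ : ∀ i j, Q i j * Q j i = 1)
    (σ τ : Equiv.Perm (Fin n)) :
    qQ Q (σ * τ) = qQ Q σ * qQ (fun i j => Q (σ i) (σ j)) τ ∧
      (qQ Q σ)⁻¹ = qQ (fun i j => Q (σ i) (σ j)) σ⁻¹ := by
  have main : ∀ τ : Equiv.Perm (Fin n),
      qQ Q (σ * τ) = qQ Q σ * qQ (fun i j => Q (σ i) (σ j)) τ := by
    intro τ
    rw [qQ_eq, qQ_eq, qQ_eq]
    rw [← prod_ordp τ (fun p => if σ p.2 < σ p.1 then Q (σ p.2) (σ p.1) else 1),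
      ← Finset.prod_mul_distrib]
    refine Finset.prod_congr rfl ?_
    intro p hp
    simp only [Pn, Finset.mem_filter, Finset.mem_univ, true_and] at hp
    rw [Equiv.Perm.mul_apply, Equiv.Perm.mul_apply]
    unfold ordp
    rcases lt_trichotomy (τ p.1) (τ p.2) with h | h | h
    · rw [if_pos h, if_neg (not_lt.2 h.le)]
      simp
    · exact absurd (τ.injective h) (ne_of_lt hp)
    · rw [if_neg (not_lt.2 h.le), if_pos h]
      rcases lt_trichotomy (σ (τ p.1)) (σ (τ p.2)) with h2 | h2 | h2
      · rw [if_neg (not_lt.2 h2.le), if_pos h2, hQ]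
      · exact absurd (σ.injective h2) (ne_of_gt h)
      · rw [if_pos h2, if_neg (not_lt.2 h2.le), one_mul]
  refine ⟨main τ, ?_⟩
  have h1 := main σ⁻¹
  rw [mul_inv_cancel] at h1
  have h2 : qQ Q (1 : Equiv.Perm (Fin n)) = 1 := by
    unfold qQ
    rw [Finset.prod_eq_one]
    intro p hp
    simp only [Finset.mem_filter] at hp
    exact absurd hp.2.2 (not_lt.2 hp.2.1.le)
  rw [h2] at h1
  exact inv_eq_of_mul_eq_one_right h1.symm

end NC
end
end

section
/- For every n ≥ 1, every tuple Γ̃ = (Γ₁,…,Γ_n) of elements of M and all σ, τ ∈ S_n: (i) Z_n(Γ̃∘τ) = q(Γ̃,τ)⁻²·Z_n(Γ̃); (ii) C_{Γ̃∘τ}(τ⁻¹∘σ) = q(Γ̃,τ)·C_{Γ̃}(σ). -/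
open scoped Classical

noncomputable section

namespace NC

variable {d : ℕ} {K : Type*} [CommRing K]

lemma list_prod_mul_symm {α : Type*} {G : Type*} [CommGroup G]
    (f : α → α → G) (hf : ∀ a b, f a b * f b a = 1) (l l' : List α) :
    (l.map fun i => (l'.map fun j => f i j).prod).prod *
      (l'.map fun j => (l.map fun i => f j i).prod).prod = 1 := by
  induction l with
  | nil => simp
  | cons a t ih =>
    simp only [List.map_cons, List.prod_cons]
    have h1 : (l'.map fun j => (t.map fun i => f j i).prod).prod *
        (l'.map fun j => f j a).prod =
        (l'.map fun j => ((a :: t).map fun i => f j i).prod).prod := by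
      rw [← List.prod_map_mul]
      congr 1
      apply List.map_congr_left
      intro j _
      simp [List.prod_cons, mul_comm]
    calc ((l'.map fun j => f a j).prod * (t.map fun i => (l'.map fun j => f i j).prod).prod) *
          (l'.map fun j => ((a :: t).map fun i => f j i).prod).prod
        = ((l'.map fun j => f a j).prod * (l'.map fun j => f j a).prod) *
          ((t.map fun i => (l'.map fun j => f i j).prod).prod *
            (l'.map fun j => (t.map fun i => f j i).prod).prod) := by
          rw [← h1]
          ac_rfl
      _ = 1 := by
          rw [ih, ← List.prod_map_mul]
          have : (l'.map fun j => f a j * f j a) = l'.map fun _ => (1 : G) := by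
            apply List.map_congr_left; intro j _; exact hf a j
          simp [this]

lemma qT_mul_qT_symm {d : ℕ} {K : Type*} [CommRing K]
    (q : Fin (2 * d) → Fin (2 * d) → Kˣ) (hq2 : ∀ i j, q i j * q j i = 1)
    (a b : M d) : qT q a b * qT q b a = 1 :=
  list_prod_mul_symm q hq2 (leafList a) (leafList b)

/-- The cocycle identity for `qPerm`. -/
lemma qPerm_cocycle {d : ℕ} {K : Type*} [CommRing K]
    (q : Fin (2 * d) → Fin (2 * d) → Kˣ) (hq2 : ∀ i j, q i j * q j i = 1)
    {n : ℕ} (Γ : Fin n → M d) (σ τ : Equiv.Perm (Fin n)) :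
    qPerm q (fun i => Γ (τ i)) (τ⁻¹ * σ) * qPerm q Γ τ = qPerm q Γ σ := by
  classical
  set F : Fin n × Fin n → Kˣ := fun p => qT q (Γ p.1) (Γ p.2) with hF
  have hFsymm : ∀ p : Fin n × Fin n, F (p.2, p.1) = (F p)⁻¹ := by
    intro p
    rw [eq_inv_iff_mul_eq_one, mul_comm]
    exact qT_mul_qT_symm q hq2 _ _
  -- rewrite the first factor after reindexing by τ on both coordinates
  have step1 : qPerm q (fun i => Γ (τ i)) (τ⁻¹ * σ) =
      ∏ p : Fin n × Fin n,
        if τ.symm p.1 < τ.symm p.2 ∧ σ.symm p.2 < σ.symm p.1 then F p else 1 := by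
    rw [qPerm, Finset.prod_filter]
    rw [← Equiv.prod_comp (Equiv.prodCongr τ τ)
      (fun p : Fin n × Fin n =>
        if τ.symm p.1 < τ.symm p.2 ∧ σ.symm p.2 < σ.symm p.1 then F p else 1)]
    apply Finset.prod_congr rfl
    intro p _
    have h2 : ∀ x : Fin n, (τ⁻¹ * σ).symm x = σ.symm (τ x) := by
      intro x; rfl
    simp only [Equiv.prodCongr_apply, Prod.map, h2, hF, Equiv.symm_apply_apply,
      Equiv.Perm.coe_mul, Function.comp_apply]
  have step2 : qPerm q Γ τ =
      ∏ p : Fin n × Fin n,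
        if p.1 < p.2 ∧ τ.symm p.2 < τ.symm p.1 then F p else 1 := by
    rw [qPerm, Finset.prod_filter]
  have step3 : qPerm q Γ σ =
      ∏ p : Fin n × Fin n,
        if p.1 < p.2 ∧ σ.symm p.2 < σ.symm p.1 then F p else 1 := by
    rw [qPerm, Finset.prod_filter]
  -- split the first product according to the order of the coordinates
  have split1 : (∏ p : Fin n × Fin n,
      if τ.symm p.1 < τ.symm p.2 ∧ σ.symm p.2 < σ.symm p.1 then F p else 1) =
      (∏ p : Fin n × Fin n,
        if (τ.symm p.1 < τ.symm p.2 ∧ σ.symm p.2 < σ.symm p.1) ∧ p.1 < p.2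
          then F p else 1) *
      (∏ p : Fin n × Fin n,
        if (τ.symm p.1 < τ.symm p.2 ∧ σ.symm p.2 < σ.symm p.1) ∧ p.2 < p.1
          then F p else 1) := by
    rw [← Finset.prod_mul_distrib]
    apply Finset.prod_congr rfl
    intro p _
    by_cases hc : τ.symm p.1 < τ.symm p.2 ∧ σ.symm p.2 < σ.symm p.1
    · have hne : p.1 ≠ p.2 := by
        intro h; rw [h] at hc; exact lt_irrefl _ hc.1
      rcases lt_or_gt_of_ne hne with h | h
      · simp [hc, h, not_lt_of_gt h]
      · simp [hc, h, not_lt_of_gt h]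
    · simp [hc]
  -- reindex the second piece by the swap
  have swap1 : (∏ p : Fin n × Fin n,
      if (τ.symm p.1 < τ.symm p.2 ∧ σ.symm p.2 < σ.symm p.1) ∧ p.2 < p.1
        then F p else 1) =
      ∏ p : Fin n × Fin n,
        if (τ.symm p.2 < τ.symm p.1 ∧ σ.symm p.1 < σ.symm p.2) ∧ p.1 < p.2
          then (F p)⁻¹ else 1 := by
    rw [← Equiv.prod_comp (Equiv.prodComm (Fin n) (Fin n))
      (fun p : Fin n × Fin n =>
        if (τ.symm p.1 < τ.symm p.2 ∧ σ.symm p.2 < σ.symm p.1) ∧ p.2 < p.1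
          then F p else 1)]
    apply Finset.prod_congr rfl
    intro p _
    simp only [Equiv.prodComm_apply, Prod.swap]
    by_cases hc : (τ.symm p.2 < τ.symm p.1 ∧ σ.symm p.1 < σ.symm p.2) ∧ p.1 < p.2
    · exact (if_pos hc).trans ((hFsymm p).trans (if_pos hc).symm)
    · exact (if_neg hc).trans (if_neg hc).symm
  rw [step1, step2, step3, split1, swap1, mul_assoc, ← Finset.prod_mul_distrib,
    ← Finset.prod_mul_distrib]
  apply Finset.prod_congr rfl
  intro p _
  by_cases hlt : p.1 < p.2
  · have hne : τ.symm p.1 ≠ τ.symm p.2 := fun h =>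
      (ne_of_lt hlt) (τ.symm.injective h)
    by_cases hA : σ.symm p.2 < σ.symm p.1
    · by_cases hB : τ.symm p.2 < τ.symm p.1
      · have hnb : ¬ τ.symm p.1 < τ.symm p.2 := not_lt_of_gt hB
        simp [hlt, hA, hB, hnb, not_lt_of_gt hA]
      · have hb : τ.symm p.1 < τ.symm p.2 := (lt_or_gt_of_ne hne).resolve_right hB
        simp [hlt, hA, hB, hb, not_lt_of_gt hA]
    · by_cases hB : τ.symm p.2 < τ.symm p.1
      · have hA' : σ.symm p.1 < σ.symm p.2 := by
          have hne' : σ.symm p.1 ≠ σ.symm p.2 := fun h =>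
            (ne_of_lt hlt) (σ.symm.injective h)
          exact (lt_or_gt_of_ne hne').resolve_right hA
        simp [hlt, hA, hB, hA', not_lt_of_gt hB]
      · have hb : τ.symm p.1 < τ.symm p.2 := (lt_or_gt_of_ne hne).resolve_right hB
        simp [hlt, hA, hB, hb]
  · simp [hlt]

/-- behaviour of `Z_n` and of the q-Weyl coefficients `C` under permutation of
the tuple: `Z_n(Γ̃∘τ) = q(Γ̃,τ)⁻²·Z_n(Γ̃)` and `C_{Γ̃∘τ}(τ⁻¹∘σ) = q(Γ̃,τ)·C_{Γ̃}(σ)`. -/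
theorem statement11 (d : ℕ) (hd : 1 ≤ d) (K : Type*) [Field K]
    (q : Fin (2 * d) → Fin (2 * d) → Kˣ)
    (hq1 : ∀ i, q i i = 1) (hq2 : ∀ i j, q i j * q j i = 1)
    (hZ : ∀ (n : ℕ) (Γ : Fin n → M d), Zfun (K := K) q Γ ≠ 0)
    (n : ℕ) (hn : 1 ≤ n) (Γ : Fin n → M d) (σ τ : Equiv.Perm (Fin n)) :
    Zfun (K := K) q (fun i => Γ (τ i)) =
        (((qPerm q Γ τ)⁻¹ : Kˣ) : K) ^ 2 * Zfun (K := K) q Γ ∧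
      ((qPerm q (fun i => Γ (τ i)) (τ⁻¹ * σ) : Kˣ) : K) /
          Zfun (K := K) q (fun i => Γ (τ i)) =
        ((qPerm q Γ τ : Kˣ) : K) *
          (((qPerm q Γ σ : Kˣ) : K) / Zfun (K := K) q Γ) := by
  have hco : ∀ ρ : Equiv.Perm (Fin n),
      qPerm q (fun i => Γ (τ i)) (τ⁻¹ * ρ) = qPerm q Γ ρ * (qPerm q Γ τ)⁻¹ := by
    intro ρ
    rw [eq_mul_inv_iff_mul_eq]
    exact qPerm_cocycle q hq2 Γ ρ τ
  have hZeq : Zfun (K := K) q (fun i => Γ (τ i)) =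
      (((qPerm q Γ τ)⁻¹ : Kˣ) : K) ^ 2 * Zfun (K := K) q Γ := by
    rw [Zfun, Zfun, Finset.mul_sum]
    rw [← Equiv.sum_comp (Equiv.mulLeft τ⁻¹)
      (fun ρ => ((qPerm q (fun i => Γ (τ i)) ρ : Kˣ) : K) ^ 2)]
    apply Finset.sum_congr rfl
    intro ρ _
    simp only [Equiv.coe_mulLeft, hco ρ]
    push_cast
    ring
  refine ⟨hZeq, ?_⟩
  have hZ1 : Zfun (K := K) q Γ ≠ 0 := hZ n Γ
  have hu : ((qPerm q Γ τ : Kˣ) : K) ≠ 0 := Units.ne_zero _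
  rw [hZeq, hco σ]
  push_cast
  field_simp

end NC
end
end

section
/- In the quantum-matrix algebra 𝕄, for every n ≥ 1, all tuples Γ̃ = (Γ₁,…,Γ_n) and Γ̃' = (Γ'₁,…,Γ'_n) of elements of Y⁺, and every σ ∈ S_n: L_n(Γ̃∘σ, Γ̃') = q(Γ̃,σ)·L_n(Γ̃, Γ̃') and R_n(Γ̃, Γ̃'∘σ) = q(Γ̃',σ)·R_n(Γ̃, Γ̃'), where L_n(Γ̃,Γ̃') := Σ_{κ ∈ S_n} q(Γ̃',κ)·A_{Γ₁,Γ'_{κ(1)}}·A_{Γ₂,Γ'_{κ(2)}}⋯A_{Γ_n,Γ'_{κ(n)}} and R_n(Γ̃,Γ̃') := Σ_{κ ∈ S_n} q(Γ̃,κ)·A_{Γ_{κ(1)},Γ'₁}·A_{Γ_{κ(2)},Γ'₂}⋯A_{Γ_{κ(n)},Γ'_n}. -/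
open scoped Classical

noncomputable section

namespace NC

variable {d : ℕ} {K : Type*} [CommRing K]

/-- Defining relations of the quantum-matrix algebra `𝕄`. -/
inductive Mrel (q : Fin (2 * d) → Fin (2 * d) → Kˣ) :
    FreeAlgebra K (Yp d × Yp d) → FreeAlgebra K (Yp d × Yp d) → Prop
  | rel1 (Γ₁ Γ₂ Γ₁' Γ₂' : Yp d) :
      Mrel q
        (FreeAlgebra.ι K (Γ₂, Γ₁') * FreeAlgebra.ι K (Γ₁, Γ₂') +
          ((qT q Γ₁'.1 Γ₂'.1 : Kˣ) : K) •
            (FreeAlgebra.ι K (Γ₂, Γ₂') * FreeAlgebra.ι K (Γ₁, Γ₁')))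
        (((qT q Γ₁.1 Γ₂.1 : Kˣ) : K) •
          (FreeAlgebra.ι K (Γ₁, Γ₁') * FreeAlgebra.ι K (Γ₂, Γ₂') +
            ((qT q Γ₁'.1 Γ₂'.1 : Kˣ) : K) •
              (FreeAlgebra.ι K (Γ₁, Γ₂') * FreeAlgebra.ι K (Γ₂, Γ₁'))))
  | rel2 (Γ₁ Γ₂ Γ₁' Γ₂' : Yp d) :
      Mrel q
        (FreeAlgebra.ι K (Γ₁, Γ₂') * FreeAlgebra.ι K (Γ₂, Γ₁') +
          ((qT q Γ₁.1 Γ₂.1 : Kˣ) : K) •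
            (FreeAlgebra.ι K (Γ₂, Γ₂') * FreeAlgebra.ι K (Γ₁, Γ₁')))
        (((qT q Γ₁'.1 Γ₂'.1 : Kˣ) : K) •
          (FreeAlgebra.ι K (Γ₁, Γ₁') * FreeAlgebra.ι K (Γ₂, Γ₂') +
            ((qT q Γ₁.1 Γ₂.1 : Kˣ) : K) •
              (FreeAlgebra.ι K (Γ₂, Γ₁') * FreeAlgebra.ι K (Γ₁, Γ₂'))))

/-- The quantum-matrix algebra `𝕄`. -/
abbrev Mq (q : Fin (2 * d) → Fin (2 * d) → Kˣ) := RingQuot (Mrel (K := K) q)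

/-- The generators `A_{Γ,Γ'}` of `𝕄`. -/
def Amat (q : Fin (2 * d) → Fin (2 * d) → Kˣ) (Γ Γ' : Yp d) : Mq q :=
  RingQuot.mkAlgHom K (Mrel q) (FreeAlgebra.ι K (Γ, Γ'))

/-- `L_n(Γ̃,Γ̃') = Σ_{κ} q(Γ̃',κ)·A_{Γ₁,Γ'_{κ(1)}}⋯A_{Γ_n,Γ'_{κ(n)}}`. -/
def Lfun (q : Fin (2 * d) → Fin (2 * d) → Kˣ) {n : ℕ} (Γ Γ' : Fin n → Yp d) :
    Mq (K := K) q :=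
  ∑ κ : Equiv.Perm (Fin n),
    ((qPerm q (fun i => (Γ' i).1) κ : Kˣ) : K) •
      (List.ofFn fun i => Amat q (Γ i) (Γ' (κ i))).prod

/-- `R_n(Γ̃,Γ̃') = Σ_{κ} q(Γ̃,κ)·A_{Γ_{κ(1)},Γ'₁}⋯A_{Γ_{κ(n)},Γ'_n}`. -/
def Rfun (q : Fin (2 * d) → Fin (2 * d) → Kˣ) {n : ℕ} (Γ Γ' : Fin n → Yp d) :
    Mq (K := K) q :=
  ∑ κ : Equiv.Perm (Fin n),
    ((qPerm q (fun i => (Γ i).1) κ : Kˣ) : K) •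
      (List.ofFn fun i => Amat q (Γ (κ i)) (Γ' i)).prod

section Aux

variable {d : ℕ} {K : Type*} [CommRing K]

lemma ofFn_prod_split {R : Type*} [Monoid R] {n : ℕ} (f : Fin n → R) (u : ℕ) (h : u + 1 < n) :
    (List.ofFn f).prod =
      (List.ofFn fun i : Fin u => f ⟨i.1, by omega⟩).prod *
        (f ⟨u, by omega⟩ * (f ⟨u + 1, h⟩ *
          (List.ofFn fun i : Fin (n - (u + 2)) => f ⟨u + 2 + i.1, by omega⟩).prod)) := by
  have hlist : List.ofFn f =
      (List.ofFn fun i : Fin u => f ⟨i.1, by omega⟩) ++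
        f ⟨u, by omega⟩ :: f ⟨u + 1, h⟩ ::
          (List.ofFn fun i : Fin (n - (u + 2)) => f ⟨u + 2 + i.1, by omega⟩) := by
    apply List.ext_getElem
    · simp; omega
    · intro i h1 h2
      rw [List.getElem_ofFn]
      by_cases c1 : i < u
      · rw [List.getElem_append_left (by simpa using c1), List.getElem_ofFn]
      · rw [List.getElem_append_right (by simpa using c1)]
        simp only [List.length_ofFn]
        by_cases c2 : i = u
        · subst c2; simp
        · by_cases c3 : i = u + 1
          · subst c3
            have : u + 1 - u = 1 := by omega
            simp [this]
          · simp only [List.getElem_cons]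
            split_ifs with d1 d2
            · omega
            · omega
            · rw [List.getElem_ofFn]
              exact congrArg f (Fin.ext (by simp; omega))
  rw [hlist]
  simp [List.prod_append, mul_assoc]

lemma prod_prod_antisymm (q : Fin (2 * d) → Fin (2 * d) → Kˣ)
    (hq2 : ∀ i j, q i j * q j i = 1) (l l' : List (Fin (2 * d))) :
    ((l.map fun i => ((l'.map fun j => q i j).prod)).prod) *
    ((l'.map fun j => ((l.map fun i => q j i).prod)).prod) = 1 := by
  induction l with
  | nil => simp
  | cons a t ih =>
    simp only [List.map_cons, List.prod_cons, List.prod_map_mul]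
    have h2 : (l'.map fun j => q a j).prod * (l'.map fun j => q j a).prod = 1 := by
      rw [← List.prod_map_mul]; simp [hq2]
    calc (l'.map fun j => q a j).prod * (t.map fun i => (l'.map fun j => q i j).prod).prod *
          ((l'.map fun j => q j a).prod * (l'.map fun j => (t.map fun i => q j i).prod).prod)
        = ((l'.map fun j => q a j).prod * (l'.map fun j => q j a).prod) *
          ((t.map fun i => (l'.map fun j => q i j).prod).prod *
           (l'.map fun j => (t.map fun i => q j i).prod).prod) := mul_mul_mul_comm _ _ _ _
      _ = 1 := by rw [h2, ih, one_mul]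

lemma qT_antisymm (q : Fin (2 * d) → Fin (2 * d) → Kˣ)
    (hq2 : ∀ i j, q i j * q j i = 1) (Γ Γ' : M d) :
    qT q Γ Γ' * qT q Γ' Γ = 1 :=
  prod_prod_antisymm q hq2 (leafList Γ) (leafList Γ')

lemma qPerm_repr (q : Fin (2 * d) → Fin (2 * d) → Kˣ) {n : ℕ} (Γ : Fin n → M d)
    (σ : Equiv.Perm (Fin n)) :
    qPerm q Γ σ = ∏ p ∈ Finset.univ.filter (fun p : Fin n × Fin n => p.1 < p.2),
      (if σ.symm p.2 < σ.symm p.1 then qT q (Γ p.1) (Γ p.2) else 1) := by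
  rw [qPerm, ← Finset.filter_filter, Finset.prod_filter]

lemma qPerm_one (q : Fin (2 * d) → Fin (2 * d) → Kˣ) {n : ℕ} (Γ : Fin n → M d) :
    qPerm q Γ (1 : Equiv.Perm (Fin n)) = 1 := by
  rw [qPerm_repr]
  apply Finset.prod_eq_one
  intro p hp
  simp only [Finset.mem_filter] at hp
  have hne : ¬((1 : Equiv.Perm (Fin n)).symm p.2 < (1 : Equiv.Perm (Fin n)).symm p.1) :=
    fun hlt => absurd hp.2 (asymm hlt)
  rw [if_neg hne]

lemma qPerm_swap (q : Fin (2 * d) → Fin (2 * d) → Kˣ) {n : ℕ} (Γ : Fin n → M d)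
    (u v : Fin n) (hv : v.1 = u.1 + 1) :
    qPerm q Γ (Equiv.swap u v) = qT q (Γ u) (Γ v) := by
  have huv : u ≠ v := fun h => by rw [h] at hv; omega
  have hswap : ∀ w : Fin n, (Equiv.swap u v w).1 =
      if w.1 = u.1 then v.1 else if w.1 = v.1 then u.1 else w.1 := by
    intro w
    rw [Equiv.swap_apply_def]
    split_ifs <;> simp only [Fin.ext_iff] at * <;> omega
  rw [qPerm]
  have hfilter : Finset.univ.filter
      (fun p : Fin n × Fin n => p.1 < p.2 ∧
        (Equiv.swap u v).symm p.2 < (Equiv.swap u v).symm p.1) = {(u, v)} := by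
    ext p
    rw [Finset.mem_filter]
    simp only [Finset.mem_filter, Finset.mem_univ, true_and, Finset.mem_singleton,
      Equiv.symm_swap]
    constructor
    · rintro ⟨h1, h2⟩
      have h1' : p.1.1 < p.2.1 := h1
      have h2' : (Equiv.swap u v p.2).1 < (Equiv.swap u v p.1).1 := h2
      rw [hswap, hswap] at h2'
      have hp : p.1.1 = u.1 ∧ p.2.1 = v.1 := by
        split_ifs at h2' <;> omega
      exact Prod.ext (Fin.ext hp.1) (Fin.ext hp.2)
    · rintro rfl
      constructor
      · show u < v
        rw [Fin.lt_def]; omega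
      · show Equiv.swap u v v < Equiv.swap u v u
        rw [Equiv.swap_apply_left, Equiv.swap_apply_right, Fin.lt_def]
        omega
  rw [hfilter, Finset.prod_singleton]

lemma qPerm_mul (q : Fin (2 * d) → Fin (2 * d) → Kˣ)
    (hq2 : ∀ i j, q i j * q j i = 1) {n : ℕ} (Γ : Fin n → M d)
    (σ τ : Equiv.Perm (Fin n)) :
    qPerm q Γ (σ * τ) = qPerm q (fun i => Γ (σ i)) τ * qPerm q Γ σ := by
  classical
  have hmemS : ∀ p : Fin n × Fin n,
      (p ∈ Finset.univ.filter (fun p : Fin n × Fin n => p.1 < p.2)) ↔ p.1 < p.2 := by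
    intro p; simp
  have hmem : ∀ (ρ : Equiv.Perm (Fin n)) (a : Fin n × Fin n),
      a ∈ Finset.univ.filter (fun p : Fin n × Fin n => p.1 < p.2) →
      (if ρ a.1 < ρ a.2 then (ρ a.1, ρ a.2) else (ρ a.2, ρ a.1)) ∈
        Finset.univ.filter (fun p : Fin n × Fin n => p.1 < p.2) := by
    intro ρ a ha
    rw [hmemS] at ha ⊢
    split_ifs with h1
    · exact h1
    · rcases lt_or_eq_of_le (not_lt.mp h1) with h2 | h2
      · exact h2
      · exact absurd (ρ.injective h2) (ne_of_gt ha)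
  have hinv : ∀ (ρ : Equiv.Perm (Fin n)) (a : Fin n × Fin n),
      a ∈ Finset.univ.filter (fun p : Fin n × Fin n => p.1 < p.2) →
      (if ρ.symm (if ρ a.1 < ρ a.2 then (ρ a.1, ρ a.2) else (ρ a.2, ρ a.1)).1 <
          ρ.symm (if ρ a.1 < ρ a.2 then (ρ a.1, ρ a.2) else (ρ a.2, ρ a.1)).2 then
        (ρ.symm (if ρ a.1 < ρ a.2 then (ρ a.1, ρ a.2) else (ρ a.2, ρ a.1)).1,
         ρ.symm (if ρ a.1 < ρ a.2 then (ρ a.1, ρ a.2) else (ρ a.2, ρ a.1)).2)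
      else
        (ρ.symm (if ρ a.1 < ρ a.2 then (ρ a.1, ρ a.2) else (ρ a.2, ρ a.1)).2,
         ρ.symm (if ρ a.1 < ρ a.2 then (ρ a.1, ρ a.2) else (ρ a.2, ρ a.1)).1)) = a := by
    intro ρ a ha
    rw [hmemS] at ha
    by_cases h1 : ρ a.1 < ρ a.2
    · rw [if_pos h1]
      simp only [Equiv.symm_apply_apply]
      rw [if_pos ha]
    · rw [if_neg h1]
      simp only [Equiv.symm_apply_apply]
      rw [if_neg (asymm ha)]
  rw [qPerm_repr, qPerm_repr, qPerm_repr]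
  have hre : (∏ p ∈ Finset.univ.filter (fun p : Fin n × Fin n => p.1 < p.2),
        if τ.symm p.2 < τ.symm p.1 then qT q (Γ (σ p.1)) (Γ (σ p.2)) else 1)
      = ∏ p ∈ Finset.univ.filter (fun p : Fin n × Fin n => p.1 < p.2),
          (fun b : Fin n × Fin n =>
            if τ.symm b.2 < τ.symm b.1 then qT q (Γ (σ b.1)) (Γ (σ b.2)) else 1)
          (if σ.symm p.1 < σ.symm p.2 then (σ.symm p.1, σ.symm p.2)
           else (σ.symm p.2, σ.symm p.1)) := by
    refine Finset.prod_nbij'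
      (i := fun p : Fin n × Fin n =>
        if σ p.1 < σ p.2 then (σ p.1, σ p.2) else (σ p.2, σ p.1))
      (j := fun p : Fin n × Fin n =>
        if σ.symm p.1 < σ.symm p.2 then (σ.symm p.1, σ.symm p.2)
        else (σ.symm p.2, σ.symm p.1))
      (hmem σ) (fun a ha => by simpa using hmem σ.symm a ha)
      (fun a ha => by simpa using hinv σ a ha)
      (fun a ha => by simpa using hinv σ.symm a ha) ?_
    intro a ha
    dsimp only
    rw [hinv σ a ha]
  rw [hre, ← Finset.prod_mul_distrib]
  apply Finset.prod_congr rfl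
  intro p hp
  rw [hmemS] at hp
  have hmul : ∀ x, (σ * τ).symm x = τ.symm (σ.symm x) := fun x => rfl
  have hne : σ.symm p.1 ≠ σ.symm p.2 := fun h => absurd (σ.symm.injective h) (ne_of_lt hp)
  rw [hmul, hmul]
  by_cases h1 : σ.symm p.1 < σ.symm p.2
  · rw [if_pos h1]
    simp only [Equiv.apply_symm_apply]
    rw [if_neg (asymm h1), mul_one]
  · have h2 : σ.symm p.2 < σ.symm p.1 := lt_of_le_of_ne (not_lt.mp h1) (Ne.symm hne)
    rw [if_neg h1, if_pos h2]
    simp only [Equiv.apply_symm_apply]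
    by_cases h3 : τ.symm (σ.symm p.2) < τ.symm (σ.symm p.1)
    · rw [if_pos h3, if_neg (asymm h3), one_mul]
    · have hne2 : τ.symm (σ.symm p.1) ≠ τ.symm (σ.symm p.2) :=
        fun h => absurd (τ.symm.injective h) hne
      have h4 : τ.symm (σ.symm p.1) < τ.symm (σ.symm p.2) :=
        lt_of_le_of_ne (not_lt.mp h3) hne2
      rw [if_neg h3, if_pos h4]
      exact (qT_antisymm q hq2 (Γ p.2) (Γ p.1)).symm

lemma ofFn_prod_split' {R : Type*} [Monoid R] {n : ℕ} (f : Fin n → R) (u v : Fin n)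
    (hv : v.1 = u.1 + 1) (e1 : Fin u.1 → Fin n) (e2 : Fin (n - (u.1 + 2)) → Fin n)
    (he1 : ∀ i, (e1 i).1 = i.1) (he2 : ∀ i, (e2 i).1 = u.1 + 2 + i.1) :
    (List.ofFn f).prod =
      (List.ofFn fun i => f (e1 i)).prod *
        (f u * (f v * (List.ofFn fun i => f (e2 i)).prod)) := by
  have hu2 : u.1 + 1 < n := by omega
  rw [ofFn_prod_split f u.1 hu2]
  congr 1
  · exact congrArg (fun g : Fin u.1 → R => (List.ofFn g).prod)
      (funext fun i => congrArg f (Fin.ext (he1 i).symm))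
  · refine congrArg₂ (· * ·) (congrArg f (Fin.ext rfl))
      (congrArg₂ (· * ·) (congrArg f (Fin.ext hv.symm)) ?_)
    exact congrArg (fun g : Fin (n - (u.1 + 2)) → R => (List.ofFn g).prod)
      (funext fun i => congrArg f (Fin.ext (he2 i).symm))

lemma relA1 (q : Fin (2 * d) → Fin (2 * d) → Kˣ) (Γ₁ Γ₂ Γ₁' Γ₂' : Yp d) :
    Amat (K := K) q Γ₂ Γ₁' * Amat q Γ₁ Γ₂' +
      ((qT q Γ₁'.1 Γ₂'.1 : Kˣ) : K) • (Amat q Γ₂ Γ₂' * Amat q Γ₁ Γ₁') =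
    ((qT q Γ₁.1 Γ₂.1 : Kˣ) : K) • (Amat q Γ₁ Γ₁' * Amat q Γ₂ Γ₂' +
      ((qT q Γ₁'.1 Γ₂'.1 : Kˣ) : K) • (Amat q Γ₁ Γ₂' * Amat q Γ₂ Γ₁')) := by
  have h := RingQuot.mkAlgHom_rel K (Mrel.rel1 (q := q) Γ₁ Γ₂ Γ₁' Γ₂')
  simpa only [map_add, map_mul, map_smul, Amat] using h

lemma relA2 (q : Fin (2 * d) → Fin (2 * d) → Kˣ) (Γ₁ Γ₂ Γ₁' Γ₂' : Yp d) :
    Amat (K := K) q Γ₁ Γ₂' * Amat q Γ₂ Γ₁' +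
      ((qT q Γ₁.1 Γ₂.1 : Kˣ) : K) • (Amat q Γ₂ Γ₂' * Amat q Γ₁ Γ₁') =
    ((qT q Γ₁'.1 Γ₂'.1 : Kˣ) : K) • (Amat q Γ₁ Γ₁' * Amat q Γ₂ Γ₂' +
      ((qT q Γ₁.1 Γ₂.1 : Kˣ) : K) • (Amat q Γ₂ Γ₁' * Amat q Γ₁ Γ₂')) := by
  have h := RingQuot.mkAlgHom_rel K (Mrel.rel2 (q := q) Γ₁ Γ₂ Γ₁' Γ₂')
  simpa only [map_add, map_mul, map_smul, Amat] using h

lemma Lfun_swap (q : Fin (2 * d) → Fin (2 * d) → Kˣ)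
    (hq2 : ∀ i j, q i j * q j i = 1) {n : ℕ} (Γ Γ' : Fin n → Yp d)
    (u v : Fin n) (hv : v.1 = u.1 + 1) :
    Lfun (K := K) q (fun i => Γ (Equiv.swap u v i)) Γ' =
      ((qT q (Γ u).1 (Γ v).1 : Kˣ) : K) • Lfun (K := K) q Γ Γ' := by
  classical
  obtain ⟨e1, he1⟩ : ∃ e1 : Fin u.1 → Fin n, ∀ i, (e1 i).1 = i.1 :=
    ⟨fun i => ⟨i.1, by omega⟩, fun i => rfl⟩
  obtain ⟨e2, he2⟩ : ∃ e2 : Fin (n - (u.1 + 2)) → Fin n, ∀ i, (e2 i).1 = u.1 + 2 + i.1 :=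
    ⟨fun i => ⟨u.1 + 2 + i.1, by omega⟩, fun i => rfl⟩
  have hswap_e1 : ∀ i, Equiv.swap u v (e1 i) = e1 i := by
    intro i
    apply Equiv.swap_apply_of_ne_of_ne <;>
      · intro h; have h' := congrArg Fin.val h; rw [he1] at h'; omega
  have hswap_e2 : ∀ i, Equiv.swap u v (e2 i) = e2 i := by
    intro i
    apply Equiv.swap_apply_of_ne_of_ne <;>
      · intro h; have h' := congrArg Fin.val h; rw [he2] at h'; omega
  have hswap_u : Equiv.swap u v u = v := Equiv.swap_apply_left u v
  have hswap_v : Equiv.swap u v v = u := Equiv.swap_apply_right u v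
  have key1 : ∀ F : Fin n → Mq (K := K) q, (List.ofFn F).prod =
      (List.ofFn fun i => F (e1 i)).prod *
        (F u * (F v * (List.ofFn fun i => F (e2 i)).prod)) :=
    fun F => ofFn_prod_split' F u v hv e1 e2 he1 he2
  simp only [Lfun]
  rw [Finset.smul_sum, ← sub_eq_zero, ← Finset.sum_sub_distrib]
  apply Finset.sum_ninvolution (g := fun κ => κ * Equiv.swap u v)
  · intro κ
    have hQ : (qPerm q (fun i => ((Γ' i).1 : M d)) (κ * Equiv.swap u v)) =
        qT q (Γ' (κ u)).1 (Γ' (κ v)).1 * qPerm q (fun i => (Γ' i).1) κ := by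
      rw [qPerm_mul q hq2]
      congr 1
      exact qPerm_swap q (fun i => ((Γ' (κ i)).1 : M d)) u v hv
    rw [key1 (fun i => Amat (K := K) q (Γ (Equiv.swap u v i)) (Γ' (κ i))),
      key1 (fun i => Amat (K := K) q (Γ (Equiv.swap u v i)) (Γ' ((κ * Equiv.swap u v) i))),
      key1 (fun i => Amat (K := K) q (Γ i) (Γ' (κ i))),
      key1 (fun i => Amat (K := K) q (Γ i) (Γ' ((κ * Equiv.swap u v) i))),
      hQ, Units.val_mul]
    simp only [Equiv.Perm.mul_apply, hswap_e1, hswap_e2, hswap_u, hswap_v]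
    have hrel := relA1 (K := K) q (Γ u) (Γ v) (Γ' (κ u)) (Γ' (κ v))
    set X := (List.ofFn fun i => Amat (K := K) q (Γ (e1 i)) (Γ' (κ (e1 i)))).prod with hX
    set Y := (List.ofFn fun i => Amat (K := K) q (Γ (e2 i)) (Γ' (κ (e2 i)))).prod with hY
    set a := Amat (K := K) q (Γ u) (Γ' (κ u)) with ha
    set b := Amat (K := K) q (Γ v) (Γ' (κ v)) with hb
    set c := Amat (K := K) q (Γ u) (Γ' (κ v)) with hc
    set e := Amat (K := K) q (Γ v) (Γ' (κ u)) with he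
    set Q := ((qPerm q (fun i => ((Γ' i).1 : M d)) κ : Kˣ) : K) with hQ'
    set r := ((qT q (Γ' (κ u)).1 (Γ' (κ v)).1 : Kˣ) : K) with hr
    set p := ((qT q (Γ u).1 (Γ v).1 : Kˣ) : K) with hp
    have h3 : X * (e * (c * Y)) + r • (X * (b * (a * Y))) =
        p • (X * (a * (b * Y))) + (p * r) • (X * (c * (e * Y))) := by
      have h2 : X * ((e * c + r • (b * a)) * Y) =
          X * ((p • (a * b + r • (c * e))) * Y) := by rw [hrel]
      simpa only [add_mul, smul_mul_assoc, mul_add, mul_smul_comm, mul_assoc,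
        smul_smul, smul_add] using h2
    linear_combination (norm := module) Q • h3
  · intro κ _
    intro hEq
    have hτ1 : Equiv.swap u v = 1 := mul_left_cancel (a := κ) (by rw [mul_one]; exact hEq)
    have h2 : v = u := by
      have h3 := congrArg (fun e : Equiv.Perm (Fin n) => e u) hτ1
      simpa [Equiv.swap_apply_left] using h3
    have h4 := congrArg Fin.val h2
    omega
  · intro κ; exact Finset.mem_univ _
  · intro κ; rw [mul_assoc, Equiv.swap_mul_self, mul_one]

lemma Rfun_swap (q : Fin (2 * d) → Fin (2 * d) → Kˣ)
    (hq2 : ∀ i j, q i j * q j i = 1) {n : ℕ} (Γ Γ' : Fin n → Yp d)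
    (u v : Fin n) (hv : v.1 = u.1 + 1) :
    Rfun (K := K) q Γ (fun i => Γ' (Equiv.swap u v i)) =
      ((qT q (Γ' u).1 (Γ' v).1 : Kˣ) : K) • Rfun (K := K) q Γ Γ' := by
  classical
  obtain ⟨e1, he1⟩ : ∃ e1 : Fin u.1 → Fin n, ∀ i, (e1 i).1 = i.1 :=
    ⟨fun i => ⟨i.1, by omega⟩, fun i => rfl⟩
  obtain ⟨e2, he2⟩ : ∃ e2 : Fin (n - (u.1 + 2)) → Fin n, ∀ i, (e2 i).1 = u.1 + 2 + i.1 :=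
    ⟨fun i => ⟨u.1 + 2 + i.1, by omega⟩, fun i => rfl⟩
  have hswap_e1 : ∀ i, Equiv.swap u v (e1 i) = e1 i := by
    intro i
    apply Equiv.swap_apply_of_ne_of_ne <;>
      · intro h; have h' := congrArg Fin.val h; rw [he1] at h'; omega
  have hswap_e2 : ∀ i, Equiv.swap u v (e2 i) = e2 i := by
    intro i
    apply Equiv.swap_apply_of_ne_of_ne <;>
      · intro h; have h' := congrArg Fin.val h; rw [he2] at h'; omega
  have hswap_u : Equiv.swap u v u = v := Equiv.swap_apply_left u v
  have hswap_v : Equiv.swap u v v = u := Equiv.swap_apply_right u v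
  have key1 : ∀ F : Fin n → Mq (K := K) q, (List.ofFn F).prod =
      (List.ofFn fun i => F (e1 i)).prod *
        (F u * (F v * (List.ofFn fun i => F (e2 i)).prod)) :=
    fun F => ofFn_prod_split' F u v hv e1 e2 he1 he2
  simp only [Rfun]
  rw [Finset.smul_sum, ← sub_eq_zero, ← Finset.sum_sub_distrib]
  apply Finset.sum_ninvolution (g := fun κ => κ * Equiv.swap u v)
  · intro κ
    have hQ : (qPerm q (fun i => ((Γ i).1 : M d)) (κ * Equiv.swap u v)) =
        qT q (Γ (κ u)).1 (Γ (κ v)).1 * qPerm q (fun i => (Γ i).1) κ := by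
      rw [qPerm_mul q hq2]
      congr 1
      exact qPerm_swap q (fun i => ((Γ (κ i)).1 : M d)) u v hv
    rw [key1 (fun i => Amat (K := K) q (Γ (κ i)) (Γ' (Equiv.swap u v i))),
      key1 (fun i => Amat (K := K) q (Γ ((κ * Equiv.swap u v) i)) (Γ' (Equiv.swap u v i))),
      key1 (fun i => Amat (K := K) q (Γ (κ i)) (Γ' i)),
      key1 (fun i => Amat (K := K) q (Γ ((κ * Equiv.swap u v) i)) (Γ' i)),
      hQ, Units.val_mul]
    simp only [Equiv.Perm.mul_apply, hswap_e1, hswap_e2, hswap_u, hswap_v]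
    have hrel := relA2 (K := K) q (Γ (κ u)) (Γ (κ v)) (Γ' u) (Γ' v)
    set X := (List.ofFn fun i => Amat (K := K) q (Γ (κ (e1 i))) (Γ' (e1 i))).prod with hX
    set Y := (List.ofFn fun i => Amat (K := K) q (Γ (κ (e2 i))) (Γ' (e2 i))).prod with hY
    set a := Amat (K := K) q (Γ (κ u)) (Γ' u) with ha
    set b := Amat (K := K) q (Γ (κ v)) (Γ' v) with hb
    set c := Amat (K := K) q (Γ (κ u)) (Γ' v) with hc
    set e := Amat (K := K) q (Γ (κ v)) (Γ' u) with he
    set Q := ((qPerm q (fun i => ((Γ i).1 : M d)) κ : Kˣ) : K) with hQ'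
    set r := ((qT q (Γ (κ u)).1 (Γ (κ v)).1 : Kˣ) : K) with hr
    set p := ((qT q (Γ' u).1 (Γ' v).1 : Kˣ) : K) with hp
    have h3 : X * (c * (e * Y)) + r • (X * (b * (a * Y))) =
        p • (X * (a * (b * Y))) + (p * r) • (X * (e * (c * Y))) := by
      have h2 : X * ((c * e + r • (b * a)) * Y) =
          X * ((p • (a * b + r • (e * c))) * Y) := by rw [hrel]
      simpa only [add_mul, smul_mul_assoc, mul_add, mul_smul_comm, mul_assoc,
        smul_smul, smul_add] using h2
    linear_combination (norm := module) Q • h3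
  · intro κ _
    intro hEq
    have hτ1 : Equiv.swap u v = 1 := mul_left_cancel (a := κ) (by rw [mul_one]; exact hEq)
    have h2 : v = u := by
      have h3 := congrArg (fun e : Equiv.Perm (Fin n) => e u) hτ1
      simpa [Equiv.swap_apply_left] using h3
    have h4 := congrArg Fin.val h2
    omega
  · intro κ; exact Finset.mem_univ _
  · intro κ; rw [mul_assoc, Equiv.swap_mul_self, mul_one]

lemma mainLR (q : Fin (2 * d) → Fin (2 * d) → Kˣ)
    (hq2 : ∀ i j, q i j * q j i = 1) {m : ℕ} (σ : Equiv.Perm (Fin (m + 1))) :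
    ∀ Γ Γ' : Fin (m + 1) → Yp d,
      (Lfun (K := K) q (fun i => Γ (σ i)) Γ' =
        ((qPerm q (fun i => (Γ i).1) σ : Kˣ) : K) • Lfun (K := K) q Γ Γ') ∧
      (Rfun (K := K) q Γ (fun i => Γ' (σ i)) =
        ((qPerm q (fun i => (Γ' i).1) σ : Kˣ) : K) • Rfun (K := K) q Γ Γ') := by
  have hmem : σ ∈ Submonoid.closure
      (Set.range fun i : Fin m => Equiv.swap i.castSucc i.succ) := by
    rw [Equiv.Perm.mclosure_swap_castSucc_succ]
    exact Submonoid.mem_top σ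
  induction hmem using Submonoid.closure_induction with
  | mem x hx =>
    obtain ⟨i, rfl⟩ := hx
    intro Γ Γ'
    have hv : (i.succ : Fin (m + 1)).1 = (i.castSucc : Fin (m + 1)).1 + 1 := by simp
    constructor
    · rw [Lfun_swap q hq2 Γ Γ' i.castSucc i.succ hv,
        qPerm_swap q (fun i => ((Γ i).1 : M d)) i.castSucc i.succ hv]
    · rw [Rfun_swap q hq2 Γ Γ' i.castSucc i.succ hv,
        qPerm_swap q (fun i => ((Γ' i).1 : M d)) i.castSucc i.succ hv]
  | one =>
    intro Γ Γ'
    constructor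
    · rw [qPerm_one]
      simp only [Units.val_one, one_smul]
      rfl
    · rw [qPerm_one]
      simp only [Units.val_one, one_smul]
      rfl
  | mul x y hxmem hymem ihx ihy =>
    intro Γ Γ'
    constructor
    · have h1 := (ihy (fun i => Γ (x i)) Γ').1
      have h2 := (ihx Γ Γ').1
      rw [h2] at h1
      rw [qPerm_mul q hq2, Units.val_mul, mul_smul]
      exact h1
    · have h1 := (ihy Γ (fun i => Γ' (x i))).2
      have h2 := (ihx Γ Γ').2
      rw [h2] at h1
      rw [qPerm_mul q hq2, Units.val_mul, mul_smul]
      exact h1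


end Aux

/-- in the quantum-matrix algebra,
`L_n(Γ̃∘σ, Γ̃') = q(Γ̃,σ)·L_n(Γ̃,Γ̃')` and `R_n(Γ̃, Γ̃'∘σ) = q(Γ̃',σ)·R_n(Γ̃,Γ̃')`. -/
theorem statement14 (d : ℕ) (hd : 1 ≤ d) (K : Type*) [CommRing K]
    (q : Fin (2 * d) → Fin (2 * d) → Kˣ)
    (hq1 : ∀ i, q i i = 1) (hq2 : ∀ i j, q i j * q j i = 1)
    (n : ℕ) (hn : 1 ≤ n) (Γ Γ' : Fin n → Yp d) (σ : Equiv.Perm (Fin n)) :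
    Lfun (K := K) q (fun i => Γ (σ i)) Γ' =
        ((qPerm q (fun i => (Γ i).1) σ : Kˣ) : K) • Lfun (K := K) q Γ Γ' ∧
      Rfun (K := K) q Γ (fun i => Γ' (σ i)) =
        ((qPerm q (fun i => (Γ' i).1) σ : Kˣ) : K) • Rfun (K := K) q Γ Γ' := by
  obtain ⟨m, rfl⟩ : ∃ m, n = m + 1 := ⟨n - 1, by omega⟩
  exact mainLR q hq2 σ Γ Γ'

end NC
end
end
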